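/- If (X̄, Ȳ) is a global minimizer of F₀(X,Y) := f(X Yᵀ) + λ(nnzc(X) + nnzc(Y)) over ℝ^{m×d} × ℝ^{n×d}, then the sets of indices of nonzero columns of X̄ and Ȳ coincide, and nnzc(X̄) = nnzc(Ȳ) = rank(X̄ Ȳᵀ). -/

import Mathlib

open Matrix

open scoped Classical in
/-- Number of nonzero columns of a matrix. -/
noncomputable def nnzc {m d : ℕ} (A : Matrix (Fin m) (Fin d) ℝ) : ℕ :=
  (Finset.univ.filter (fun j : Fin d => (fun i => A i j) ≠ 0)).card

open scoped Classical in
lemma nnzc_eq_card {m d : ℕ} (A : Matrix (Fin m) (Fin d) ℝ) :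
    nnzc A = (Finset.univ.filter (fun j : Fin d => (fun i => A i j) ≠ 0)).card := rfl

open scoped Classical in
lemma nnzc_le_of_subset {m d : ℕ} (A : Matrix (Fin m) (Fin d) ℝ) (S : Finset (Fin d))
    (h : ∀ j ∉ S, (fun i => A i j) = 0) : nnzc A ≤ S.card := by
  apply Finset.card_le_card
  intro j hj
  simp only [nnzc_eq_card, Finset.mem_filter, Finset.mem_univ, true_and] at hj
  by_contra hjS
  exact hj (h j hjS)

open scoped Classical in
lemma rank_le_nnzc {m d : ℕ} (A : Matrix (Fin m) (Fin d) ℝ) : A.rank ≤ nnzc A := by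
  set S := Finset.univ.filter (fun j : Fin d => (fun i => A i j) ≠ 0) with hS
  have hA : A = (A.submatrix id (Subtype.val : {j // j ∈ S} → Fin d)) *
      (Matrix.of fun (s : {j // j ∈ S}) j => if (s : Fin d) = j then (1:ℝ) else 0) := by
    ext i j
    rw [Matrix.mul_apply]
    by_cases hj : j ∈ S
    · rw [Finset.sum_eq_single (⟨j, hj⟩ : {j // j ∈ S})]
      · simp
      · intro s _ hs
        have : (s : Fin d) ≠ j := fun h => hs (Subtype.ext h)
        simp [this]
      · simp
    · have hcol : (fun i => A i j) = 0 := by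
        by_contra hc
        exact hj (by simp [hS, hc])
      have : A i j = 0 := congrFun hcol i
      rw [this]
      symm
      apply Finset.sum_eq_zero
      intro s _
      have hs : (s : Fin d) ∈ S := s.2
      have : (s : Fin d) ≠ j := fun h => hj (h ▸ hs)
      simp [this]
  calc A.rank ≤ (A.submatrix id (Subtype.val : {j // j ∈ S} → Fin d)).rank := by
        conv_lhs => rw [hA]
        exact Matrix.rank_mul_le_left _ _
    _ ≤ Fintype.card {j // j ∈ S} := Matrix.rank_le_card_width _
    _ = S.card := Fintype.card_coe S

open scoped Classical in
lemma exists_factorization {m n d : ℕ} (M : Matrix (Fin m) (Fin n) ℝ) (hd : M.rank ≤ d) :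
    ∃ (X : Matrix (Fin m) (Fin d) ℝ) (Y : Matrix (Fin n) (Fin d) ℝ),
      X * Yᵀ = M ∧ nnzc X ≤ M.rank ∧ nnzc Y ≤ M.rank := by
  set r := M.rank with hr
  have hfr : Module.finrank ℝ ↥(LinearMap.range M.mulVecLin) = r := rfl
  let b : Module.Basis (Fin r) ℝ ↥(LinearMap.range M.mulVecLin) :=
    (Module.finBasis ℝ _).reindex (finCongr hfr)
  have hmem : ∀ k : Fin n, (fun i => M i k) ∈ LinearMap.range M.mulVecLin := fun k =>
    ⟨Pi.single k 1, by ext i; simp [Matrix.mulVecLin_apply, Matrix.mulVec_single]⟩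
  let col : Fin n → ↥(LinearMap.range M.mulVecLin) := fun k => ⟨fun i => M i k, hmem k⟩
  let X : Matrix (Fin m) (Fin d) ℝ :=
    Matrix.of fun i j => if h : (j : ℕ) < r then ((b ⟨j, h⟩ : Fin m → ℝ) i) else 0
  let Y : Matrix (Fin n) (Fin d) ℝ :=
    Matrix.of fun k j => if h : (j : ℕ) < r then b.repr (col k) ⟨j, h⟩ else 0
  have hXz : ∀ j : Fin d, ¬ ((j : ℕ) < r) → (fun i => X i j) = 0 := by
    intro j hj; funext i; simp [X, hj]
  have hYz : ∀ j : Fin d, ¬ ((j : ℕ) < r) → (fun k => Y k j) = 0 := by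
    intro j hj; funext k; simp [Y, hj]
  have hmemmap : ∀ j : Fin d, (j : ℕ) < r → j ∈ Finset.univ.map (Fin.castLEEmb hd) := by
    intro j hj
    exact Finset.mem_map.mpr ⟨⟨j, hj⟩, Finset.mem_univ _, by ext; simp⟩
  have hcard : (Finset.univ.map (Fin.castLEEmb hd)).card = r := by
    simp
  refine ⟨X, Y, ?_, ?_, ?_⟩
  · ext i k
    rw [Matrix.mul_apply]
    have hzero : ∀ j ∈ Finset.univ, j ∉ Finset.univ.map (Fin.castLEEmb hd) →
        X i j * Yᵀ j k = 0 := by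
      intro j _ hj
      have hjr : ¬ ((j : ℕ) < r) := fun hlt => hj (hmemmap j hlt)
      have h0 : X i j = 0 := by simpa using congrFun (hXz j hjr) i
      rw [Matrix.transpose_apply, h0, zero_mul]
    rw [← Finset.sum_subset (Finset.subset_univ _) hzero, Finset.sum_map]
    have hterm : ∀ a : Fin r, X i (Fin.castLEEmb hd a) * Yᵀ (Fin.castLEEmb hd a) k
        = b.repr (col k) a * ((b a : Fin m → ℝ) i) := by
      intro a
      have ha : ((Fin.castLEEmb hd a : Fin d) : ℕ) < r := a.isLt
      have hfin : (⟨((Fin.castLEEmb hd a : Fin d) : ℕ), ha⟩ : Fin r) = a := by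
        ext; simp
      rw [Matrix.transpose_apply]
      show (if h : _ then ((b ⟨_, h⟩ : Fin m → ℝ) i) else 0) *
        (if h : _ then b.repr (col k) ⟨_, h⟩ else 0) = _
      rw [dif_pos ha, dif_pos ha, hfin, mul_comm]
    rw [Finset.sum_congr rfl (fun a _ => hterm a)]
    have hb := b.sum_repr (col k)
    have h2 : ((∑ a : Fin r, b.repr (col k) a • b a :
        ↥(LinearMap.range M.mulVecLin)) : Fin m → ℝ) i = M i k := by
      rw [hb]
    rw [← h2, AddSubmonoidClass.coe_finset_sum, Finset.sum_apply]
    simp [smul_eq_mul]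
  · exact hcard ▸ nnzc_le_of_subset X _ (fun j hj => hXz j (fun hlt => hj (hmemmap j hlt)))
  · exact hcard ▸ nnzc_le_of_subset Y _ (fun j hj => hYz j (fun hlt => hj (hmemmap j hlt)))

/-- If `(X̄, Ȳ)` is a global minimizer of `F₀(X,Y) = f(X Yᵀ) + λ(nnzc X + nnzc Y)`,
then the nonzero-column index sets of `X̄` and `Ȳ` coincide and
`nnzc X̄ = nnzc Ȳ = rank(X̄ Ȳᵀ)`. -/
theorem global_min_nnzc_eq_rank {m n d : ℕ}
    (f : Matrix (Fin m) (Fin n) ℝ → ℝ) (hf : Continuous f)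
    (lam : ℝ) (hlam : 0 < lam)
    (Xb : Matrix (Fin m) (Fin d) ℝ) (Yb : Matrix (Fin n) (Fin d) ℝ)
    (hmin : ∀ (X : Matrix (Fin m) (Fin d) ℝ) (Y : Matrix (Fin n) (Fin d) ℝ),
      f (Xb * Ybᵀ) + lam * ((nnzc Xb : ℝ) + (nnzc Yb : ℝ)) ≤
      f (X * Yᵀ) + lam * ((nnzc X : ℝ) + (nnzc Y : ℝ))) :
    {j : Fin d | (fun i => Xb i j) ≠ 0} = {j : Fin d | (fun i => Yb i j) ≠ 0} ∧
    nnzc Xb = (Xb * Ybᵀ).rank ∧ nnzc Yb = (Xb * Ybᵀ).rank := by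
  classical
  have key : ∀ (X : Matrix (Fin m) (Fin d) ℝ) (Y : Matrix (Fin n) (Fin d) ℝ),
      X * Yᵀ = Xb * Ybᵀ → nnzc Xb + nnzc Yb ≤ nnzc X + nnzc Y := by
    intro X Y hXY
    have h := hmin X Y
    rw [hXY] at h
    have h2 : lam * ((nnzc Xb : ℝ) + (nnzc Yb : ℝ)) ≤ lam * ((nnzc X : ℝ) + (nnzc Y : ℝ)) :=
      le_of_add_le_add_left h
    have h3 := (mul_le_mul_iff_right₀ hlam).mp h2
    exact_mod_cast h3
  set SX := Finset.univ.filter (fun j : Fin d => (fun i => Xb i j) ≠ 0) with hSX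
  set SY := Finset.univ.filter (fun j : Fin d => (fun i => Yb i j) ≠ 0) with hSY
  -- zero out columns of Xb where Yb's column is zero
  have hXsubY : SX ⊆ SY := by
    let Xz : Matrix (Fin m) (Fin d) ℝ :=
      Matrix.of fun i j => if (fun i' => Yb i' j) = 0 then 0 else Xb i j
    have hprod : Xz * Ybᵀ = Xb * Ybᵀ := by
      ext i k
      rw [Matrix.mul_apply, Matrix.mul_apply]
      apply Finset.sum_congr rfl
      intro j _
      by_cases hj : (fun i' => Yb i' j) = 0
      · have : Yb k j = 0 := by simpa using congrFun hj k
        rw [Matrix.transpose_apply, this, mul_zero, mul_zero]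
      · simp [Xz, hj]
    have hfz : Finset.univ.filter (fun j : Fin d => (fun i => Xz i j) ≠ 0) = SX ∩ SY := by
      ext j
      simp only [Finset.mem_filter, Finset.mem_inter, Finset.mem_univ, true_and, hSX, hSY]
      by_cases h : (fun i' => Yb i' j) = 0
      · have hz : (fun i => Xz i j) = 0 := funext fun i => by simp [Xz, h]
        simp [hz, h]
      · have hz : (fun i => Xz i j) = (fun i => Xb i j) := funext fun i => by simp [Xz, h]
        simp [hz, h]
    have h1 : nnzc Xb ≤ nnzc Xz := by
      have := key Xz Yb hprod
      omega
    have h2 : SX.card ≤ (SX ∩ SY).card := by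
      rw [← hfz, ← nnzc_eq_card]
      rw [nnzc_eq_card Xb, ← hSX] at h1
      exact h1
    have h3 : SX ∩ SY = SX := Finset.eq_of_subset_of_card_le Finset.inter_subset_left h2
    intro j hj
    rw [← h3] at hj
    exact Finset.mem_of_mem_inter_right hj
  have hYsubX : SY ⊆ SX := by
    let Yz : Matrix (Fin n) (Fin d) ℝ :=
      Matrix.of fun k j => if (fun i' => Xb i' j) = 0 then 0 else Yb k j
    have hprod : Xb * Yzᵀ = Xb * Ybᵀ := by
      ext i k
      rw [Matrix.mul_apply, Matrix.mul_apply]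
      apply Finset.sum_congr rfl
      intro j _
      by_cases hj : (fun i' => Xb i' j) = 0
      · have : Xb i j = 0 := by simpa using congrFun hj i
        rw [this, zero_mul, zero_mul]
      · simp [Yz, hj]
    have hfz : Finset.univ.filter (fun j : Fin d => (fun k => Yz k j) ≠ 0) = SY ∩ SX := by
      ext j
      simp only [Finset.mem_filter, Finset.mem_inter, Finset.mem_univ, true_and, hSX, hSY]
      by_cases h : (fun i' => Xb i' j) = 0
      · have hz : (fun k => Yz k j) = 0 := funext fun k => by simp [Yz, h]
        simp [hz, h]
      · have hz : (fun k => Yz k j) = (fun k => Yb k j) := funext fun k => by simp [Yz, h]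
        simp [hz, h]
    have h1 : nnzc Yb ≤ nnzc Yz := by
      have := key Xb Yz hprod
      omega
    have h2 : SY.card ≤ (SY ∩ SX).card := by
      rw [← hfz, ← nnzc_eq_card]
      rw [nnzc_eq_card Yb, ← hSY] at h1
      exact h1
    have h3 : SY ∩ SX = SY := Finset.eq_of_subset_of_card_le Finset.inter_subset_left h2
    intro j hj
    rw [← h3] at hj
    exact Finset.mem_of_mem_inter_right hj
  have hSeq : SX = SY := Finset.Subset.antisymm hXsubY hYsubX
  have hnn : nnzc Xb = nnzc Yb := by
    rw [nnzc_eq_card, nnzc_eq_card, ← hSX, ← hSY, hSeq]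
  have hrle : (Xb * Ybᵀ).rank ≤ nnzc Xb :=
    le_trans (Matrix.rank_mul_le_left Xb Ybᵀ) (rank_le_nnzc Xb)
  have hrd : (Xb * Ybᵀ).rank ≤ d :=
    le_trans (Matrix.rank_mul_le_left Xb Ybᵀ) (Matrix.rank_le_width Xb)
  obtain ⟨X, Y, hP, hX, hY⟩ := exists_factorization (Xb * Ybᵀ) hrd
  have hk := key X Y hP
  have hXr : nnzc Xb = (Xb * Ybᵀ).rank := by omega
  refine ⟨?_, hXr, by omega⟩
  ext j
  have := Finset.ext_iff.mp hSeq j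
  simp only [hSX, hSY, Finset.mem_filter, Finset.mem_univ, true_and] at this
  simpa using this
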